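/- Let M be an integer-valued random variable that is symmetric (P(M = m) = P(M = -m)) and unimodal (m ↦ P(M = m) is non-increasing in |m|), and let d ≥ 0 be an integer and t > 0. Then E[log(I_M(t)/I_{M-d}(t))] ≤ (d + d²)/(2t). -/

import Mathlib

/-- Modified Bessel function of the first kind of integer order `m` (with the
convention `I_{-m} = I_m`), via its power series. -/
noncomputable def besselI (m : ℤ) (t : ℝ) : ℝ :=
  ∑' k : ℕ, (t / 2) ^ (2 * k + m.natAbs) / ((k.factorial : ℝ) * ((k + m.natAbs).factorial : ℝ))

namespace BesselAux

noncomputable def Jn (n : ℕ) (t : ℝ) : ℝ :=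
  ∑' k : ℕ, (t / 2) ^ (2 * k + n) / ((k.factorial : ℝ) * ((k + n).factorial : ℝ))

lemma besselI_eq_Jn (m : ℤ) (t : ℝ) : besselI m t = Jn m.natAbs t := rfl

lemma summable_jn (n : ℕ) {t : ℝ} (ht : 0 < t) :
    Summable (fun k : ℕ =>
      (t / 2) ^ (2 * k + n) / ((k.factorial : ℝ) * ((k + n).factorial : ℝ))) := by
  refine Summable.of_nonneg_of_le (fun k => by positivity) (fun k => ?_)
    ((Real.summable_pow_div_factorial (t ^ 2 / 4)).mul_left ((t / 2) ^ n / n.factorial))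
  have h1 : (t / 2) ^ (2 * k + n) = (t / 2) ^ n * (t ^ 2 / 4) ^ k := by
    have e : ((t / 2) ^ 2 : ℝ) = t ^ 2 / 4 := by ring
    rw [pow_add, pow_mul, e, mul_comm]
  have h2 : (n.factorial : ℝ) * k.factorial ≤ (k.factorial : ℝ) * (k + n).factorial := by
    have h3 : (n.factorial : ℝ) ≤ (k + n).factorial := by
      exact_mod_cast Nat.factorial_le (Nat.le_add_left n k)
    nlinarith [(by positivity : (0:ℝ) < (k.factorial : ℝ))]
  calc (t / 2) ^ (2 * k + n) / ((k.factorial : ℝ) * (k + n).factorial)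
      = ((t / 2) ^ n * (t ^ 2 / 4) ^ k) / ((k.factorial : ℝ) * (k + n).factorial) := by rw [h1]
    _ ≤ ((t / 2) ^ n * (t ^ 2 / 4) ^ k) / ((n.factorial : ℝ) * k.factorial) := by
        gcongr
    _ = (t / 2) ^ n / n.factorial * ((t ^ 2 / 4) ^ k / k.factorial) := by ring

lemma Jn_pos (n : ℕ) {t : ℝ} (ht : 0 < t) : 0 < Jn n t := by
  apply Summable.tsum_pos (summable_jn n ht) (fun k => by positivity) 0
  positivity

lemma jn_rec (n : ℕ) {t : ℝ} (ht : 0 < t) :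
    t * Jn n t = 2 * ((n : ℝ) + 1) * Jn (n + 1) t + t * Jn (n + 2) t := by
  have hA := summable_jn n ht
  have hB := summable_jn (n + 1) ht
  have hC := summable_jn (n + 2) ht
  set fN : ℕ → ℝ := fun k => (t / 2) ^ (2 * k + n) / ((k.factorial : ℝ) * ((k + n).factorial : ℝ)) with hfN
  set fN2 : ℕ → ℝ := fun k => (t / 2) ^ (2 * k + (n + 2)) / ((k.factorial : ℝ) * ((k + (n + 2)).factorial : ℝ)) with hfN2
  set fB : ℕ → ℝ := fun k => ((n : ℝ) + 1) * (t / 2) ^ (2 * k + n) / ((k.factorial : ℝ) * ((k + n + 1).factorial : ℝ)) with hfB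
  have hA' : Summable (fun k => fN (k + 1)) := (summable_nat_add_iff 1).2 hA
  have hfBs : Summable fB := by
    apply Summable.congr (hB.mul_left (2 * ((n : ℝ) + 1) / t))
    intro k
    have hkn : k + (n + 1) = k + n + 1 := by omega
    simp only [hfB, hkn]
    have : (t / 2) ^ (2 * k + (n + 1)) = (t / 2) ^ (2 * k + n) * (t / 2) := by
      have e : 2 * k + (n + 1) = (2 * k + n) + 1 := by omega
      rw [e, pow_succ]
    rw [this]
    field_simp
  have key : Jn n t - Jn (n + 2) t = (2 * ((n : ℝ) + 1) / t) * Jn (n + 1) t := by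
    have h1 : Jn n t = fN 0 + ∑' k, fN (k + 1) := Summable.tsum_eq_zero_add hA
    have h2 : Jn n t - Jn (n + 2) t = fN 0 + ∑' k, (fN (k + 1) - fN2 k) := by
      rw [h1, Summable.tsum_sub hA' hC]; show _ = fN 0 + (_ - Jn (n+2) t); ring
    have h3 : ∀ k, fN (k + 1) - fN2 k = fB (k + 1) := by
      intro k
      have e1 : k + 1 + n = k + n + 1 := by omega
      have e2 : k + (n + 2) = k + n + 2 := by omega
      have e3 : k + 1 + n + 1 = k + n + 2 := by omega
      have e4 : 2 * (k + 1) + n = 2 * k + (n + 2) := by omega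
      simp only [hfN, hfN2, hfB, e1, e2, e3, e4, Nat.factorial_succ (k + n + 1), Nat.factorial_succ k]
      have f1 : (k.factorial : ℝ) ≠ 0 := Nat.cast_ne_zero.2 (Nat.factorial_ne_zero k)
      have f2 : ((k + n).factorial : ℝ) ≠ 0 := Nat.cast_ne_zero.2 (Nat.factorial_ne_zero _)
      have f3 : ((k + n + 1).factorial : ℝ) ≠ 0 := Nat.cast_ne_zero.2 (Nat.factorial_ne_zero _)
      rw [Nat.factorial_succ (k + n)]
      push_cast
      field_simp
      ring
    have h4 : fN 0 = fB 0 := by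
      simp only [hfN, hfB]
      norm_num [Nat.factorial_succ]
      field_simp
    have h5 : (2 * ((n : ℝ) + 1) / t) * Jn (n + 1) t = ∑' k, fB k := by
      rw [Jn, ← tsum_mul_left]
      congr 1; funext k
      have hkn : k + (n + 1) = k + n + 1 := by omega
      simp only [hfB, hkn]
      have : (t / 2) ^ (2 * k + (n + 1)) = (t / 2) ^ (2 * k + n) * (t / 2) := by
        have e : 2 * k + (n + 1) = (2 * k + n) + 1 := by omega
        rw [e, pow_succ]
      rw [this]
      field_simp
    rw [h2, h5, Summable.tsum_eq_zero_add hfBs, h4]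
    congr 1
    exact tsum_congr fun k => h3 k
  have ht' : t ≠ 0 := ne_of_gt ht
  field_simp at key
  linarith [key]

end BesselAux

namespace BesselAux2
open BesselAux

/-- lower bound statement -/
def LowB (t : ℝ) (n : ℕ) : Prop :=
  ((n : ℝ) + Real.sqrt ((n : ℝ) ^ 2 + t ^ 2)) * Jn (n + 1) t ≤ t * Jn n t

/-- upper bound statement -/
def UpB (t : ℝ) (n : ℕ) : Prop :=
  t * Jn n t ≤ (((n : ℝ) + 1) + Real.sqrt (((n : ℝ) + 1) ^ 2 + t ^ 2)) * Jn (n + 1) t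

lemma base_lower {t : ℝ} (ht : 0 < t) (n : ℕ) (hn : t ^ 2 ≤ 4 * (n : ℝ) + 4) : LowB t n := by
  unfold LowB
  have hs : Real.sqrt ((n : ℝ) ^ 2 + t ^ 2) ≤ (n : ℝ) + 2 := by
    have h1 : (n : ℝ) ^ 2 + t ^ 2 ≤ ((n : ℝ) + 2) ^ 2 := by nlinarith
    calc Real.sqrt ((n : ℝ) ^ 2 + t ^ 2) ≤ Real.sqrt (((n : ℝ) + 2) ^ 2) := Real.sqrt_le_sqrt h1
      _ = (n : ℝ) + 2 := Real.sqrt_sq (by positivity)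
  have hrec := jn_rec n ht
  have h1 := Jn_pos (n + 1) ht
  have h2 := Jn_pos (n + 2) ht
  nlinarith [Real.sqrt_nonneg ((n : ℝ) ^ 2 + t ^ 2)]

lemma step_upper {t : ℝ} (ht : 0 < t) (n : ℕ) (h : LowB t (n + 1)) : UpB t n := by
  unfold LowB at h
  unfold UpB
  push_cast at h
  set s : ℝ := Real.sqrt (((n : ℝ) + 1) ^ 2 + t ^ 2) with hs
  have hs2 : s ^ 2 = ((n : ℝ) + 1) ^ 2 + t ^ 2 := Real.sq_sqrt (by positivity)
  have hs0 : 0 ≤ s := Real.sqrt_nonneg _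
  have hpos : 0 < ((n : ℝ) + 1) + s := by positivity
  have hrec := jn_rec n ht
  have hJ1 := Jn_pos (n + 1) ht
  have hmul : t * ((((n : ℝ) + 1) + s) * Jn (n + 2) t) ≤ t * (t * Jn (n + 1) t) :=
    mul_le_mul_of_nonneg_left h ht.le
  have key : (((n : ℝ) + 1) + s) * (t * Jn n t) ≤ (((n : ℝ) + 1) + s) * ((((n : ℝ) + 1) + s) * Jn (n + 1) t) := by
    have expand : (((n : ℝ) + 1) + s) * ((((n : ℝ) + 1) + s) * Jn (n + 1) t)
        = (((n : ℝ) + 1) ^ 2 + 2 * ((n : ℝ) + 1) * s + s ^ 2) * Jn (n + 1) t := by ring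
    rw [expand, hs2]
    nlinarith [hmul, hrec]
  exact le_of_mul_le_mul_left key hpos

lemma step_lower {t : ℝ} (ht : 0 < t) (n : ℕ) (h : UpB t (n + 1)) : LowB t n := by
  unfold UpB at h
  unfold LowB
  push_cast at h
  rw [show ((n : ℝ) + 1 + 1) = (n : ℝ) + 2 by ring] at h
  set s2 : ℝ := Real.sqrt (((n : ℝ) + 2) ^ 2 + t ^ 2) with hs2def
  set s0 : ℝ := Real.sqrt ((n : ℝ) ^ 2 + t ^ 2) with hs0def
  have hs2 : s2 ^ 2 = ((n : ℝ) + 2) ^ 2 + t ^ 2 := Real.sq_sqrt (by positivity)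
  have hs2n : 0 ≤ s2 := Real.sqrt_nonneg _
  have hs0n : 0 ≤ s0 := Real.sqrt_nonneg _
  have hle : s0 ≤ s2 := by
    apply Real.sqrt_le_sqrt; nlinarith [Nat.cast_nonneg (α := ℝ) n]
  have hrec := jn_rec n ht
  have hJ1 := Jn_pos (n + 1) ht
  have hJ2 := Jn_pos (n + 2) ht
  have hpos : 0 < ((n : ℝ) + 2) + s2 := by positivity
  have hmul : t * (t * Jn (n + 1) t) ≤ t * ((((n : ℝ) + 2) + s2) * Jn (n + 2) t) :=
    mul_le_mul_of_nonneg_left h ht.le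
  have hcoef : (((n : ℝ) + 2) + s2) * ((n : ℝ) + s0) ≤ 2 * ((n : ℝ) + 1) * (((n : ℝ) + 2) + s2) + t ^ 2 := by
    nlinarith [mul_nonneg (sub_nonneg.2 hle) (by positivity : (0 : ℝ) ≤ s2 + (n : ℝ) + 2)]
  have key : (((n : ℝ) + 2) + s2) * (((n : ℝ) + s0) * Jn (n + 1) t)
      ≤ (((n : ℝ) + 2) + s2) * (t * Jn n t) := by
    nlinarith [mul_le_mul_of_nonneg_right hcoef hJ1.le, hmul, hrec]
  exact le_of_mul_le_mul_left key hpos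

lemma low_all {t : ℝ} (ht : 0 < t) (n : ℕ) : LowB t n := by
  have main : ∀ k n : ℕ, t ^ 2 ≤ 4 * (n : ℝ) + 4 + 8 * (k : ℝ) → LowB t n := by
    intro k
    induction k with
    | zero => intro n h; exact base_lower ht n (by push_cast at h; linarith)
    | succ k ih =>
      intro n h
      refine step_lower ht n (step_upper ht (n + 1) (ih (n + 2) ?_))
      push_cast at h ⊢
      linarith
  refine main (Nat.ceil (t ^ 2)) n ?_
  have h1 : t ^ 2 ≤ (Nat.ceil (t ^ 2) : ℝ) := Nat.le_ceil _
  have h2 : (0 : ℝ) ≤ (Nat.ceil (t ^ 2) : ℝ) := Nat.cast_nonneg _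
  have h3 : (0 : ℝ) ≤ (n : ℝ) := Nat.cast_nonneg _
  linarith

lemma up_all {t : ℝ} (ht : 0 < t) (n : ℕ) : UpB t n := step_upper ht n (low_all ht (n + 1))

lemma Jn_succ_le (n : ℕ) {t : ℝ} (ht : 0 < t) : Jn (n + 1) t ≤ Jn n t := by
  have hl := low_all ht n
  unfold LowB at hl
  have hs : t ≤ Real.sqrt ((n : ℝ) ^ 2 + t ^ 2) := by
    rw [show t = Real.sqrt (t ^ 2) from (Real.sqrt_sq ht.le).symm]
    apply Real.sqrt_le_sqrt
    · rw [Real.sq_sqrt (by positivity)]; nlinarith [Nat.cast_nonneg (α := ℝ) n]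
  have hJ1 := Jn_pos (n + 1) ht
  have : t * Jn (n + 1) t ≤ t * Jn n t := by
    nlinarith [Nat.cast_nonneg (α := ℝ) n]
  exact le_of_mul_le_mul_left this ht

lemma key_exp {x t : ℝ} (ht : 0 < t) (hx : 0 ≤ x) :
    x + Real.sqrt (x ^ 2 + t ^ 2) ≤ t * Real.exp (x / t) := by
  set y := x / t with hy'
  have hy : 0 ≤ y := div_nonneg hx ht.le
  have hx' : x = t * y := by rw [hy']; field_simp
  have h1 : Real.sqrt (x ^ 2 + t ^ 2) = t * Real.sqrt (y ^ 2 + 1) := by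
    rw [hx', show (t * y) ^ 2 + t ^ 2 = t ^ 2 * (y ^ 2 + 1) by ring,
      Real.sqrt_mul (by positivity), Real.sqrt_sq ht.le]
  have hsinh : y ≤ Real.sinh y := by
    rcases eq_or_lt_of_le hy with h | h
    · simp [← h]
    · exact (Real.self_lt_sinh_iff.2 h).le
  have hcosh : Real.sqrt (y ^ 2 + 1) ≤ Real.cosh y := by
    rw [show Real.cosh y = Real.sqrt (Real.cosh y ^ 2) from (Real.sqrt_sq (Real.cosh_pos y).le).symm]
    apply Real.sqrt_le_sqrt
    nlinarith [Real.cosh_sq y, hsinh, hy]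
  calc x + Real.sqrt (x ^ 2 + t ^ 2) = t * (y + Real.sqrt (y ^ 2 + 1)) := by rw [h1, hx']; ring
    _ ≤ t * (Real.sinh y + Real.cosh y) := by
        apply mul_le_mul_of_nonneg_left (add_le_add hsinh hcosh) ht.le
    _ = t * Real.exp y := by rw [Real.sinh_add_cosh]

lemma log_ratio_le (n : ℕ) {t : ℝ} (ht : 0 < t) :
    Real.log (Jn n t) - Real.log (Jn (n + 1) t) ≤ ((n : ℝ) + 1) / t := by
  have hu := up_all ht n
  unfold UpB at hu
  have hk := key_exp ht (show (0 : ℝ) ≤ (n : ℝ) + 1 by positivity)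
  have hJ0 := Jn_pos n ht
  have hJ1 := Jn_pos (n + 1) ht
  have h1 : t * Jn n t ≤ t * (Real.exp (((n : ℝ) + 1) / t) * Jn (n + 1) t) := by
    calc t * Jn n t ≤ (((n : ℝ) + 1) + Real.sqrt (((n : ℝ) + 1) ^ 2 + t ^ 2)) * Jn (n + 1) t := hu
      _ ≤ (t * Real.exp (((n : ℝ) + 1) / t)) * Jn (n + 1) t := by
          apply mul_le_mul_of_nonneg_right hk hJ1.le
      _ = t * (Real.exp (((n : ℝ) + 1) / t) * Jn (n + 1) t) := by ring
  have h2 : Jn n t ≤ Real.exp (((n : ℝ) + 1) / t) * Jn (n + 1) t := le_of_mul_le_mul_left h1 ht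
  have h3 : Real.log (Jn n t) ≤ Real.log (Real.exp (((n : ℝ) + 1) / t) * Jn (n + 1) t) :=
    Real.log_le_log hJ0 h2
  rw [Real.log_mul (Real.exp_ne_zero _) (ne_of_gt hJ1), Real.log_exp] at h3
  linarith

lemma log_ratio_nonneg (n : ℕ) {t : ℝ} (ht : 0 < t) :
    0 ≤ Real.log (Jn n t) - Real.log (Jn (n + 1) t) := by
  have := Real.log_le_log (Jn_pos (n + 1) ht) (Jn_succ_le n ht)
  linarith

end BesselAux2

namespace BesselMain
open BesselAux BesselAux2

noncomputable def G (t : ℝ) (j : ℤ) : ℝ := Real.log (Jn j.natAbs t)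

noncomputable def ee (t : ℝ) (j : ℤ) : ℝ := G t j - G t (j - 1)

lemma G_neg (t : ℝ) (j : ℤ) : G t (-j) = G t j := by simp [G]

lemma ee_reflect (t : ℝ) (j : ℤ) : ee t (1 - j) = - ee t j := by
  unfold ee
  have h1 : G t (1 - j) = G t (j - 1) := by rw [show (1 - j : ℤ) = -(j - 1) by ring, G_neg]
  have h2 : G t (1 - j - 1) = G t j := by rw [show (1 - j - 1 : ℤ) = -j by ring, G_neg]
  rw [h1, h2]; ring

lemma ee_nonneg {t : ℝ} (ht : 0 < t) {j : ℤ} (hj : j ≤ 0) : 0 ≤ ee t j := by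
  obtain ⟨n, rfl⟩ : ∃ n : ℕ, j = -(n : ℤ) := ⟨j.natAbs, by omega⟩
  have h1 : (-(n : ℤ)).natAbs = n := by simp
  have h2 : (-(n : ℤ) - 1).natAbs = n + 1 := by omega
  unfold ee G
  rw [h1, h2]
  exact log_ratio_nonneg n ht

lemma ee_nonpos {t : ℝ} (ht : 0 < t) {j : ℤ} (hj : 1 ≤ j) : ee t j ≤ 0 := by
  have := ee_nonneg ht (j := 1 - j) (by omega)
  rw [ee_reflect] at this
  linarith

lemma neg_ee_le {t : ℝ} (ht : 0 < t) {j : ℤ} (hj : 1 ≤ j) : -(ee t j) ≤ (j : ℝ) / t := by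
  obtain ⟨n, rfl⟩ : ∃ n : ℕ, j = (n : ℤ) + 1 := ⟨(j - 1).toNat, by omega⟩
  have h1 : ((n : ℤ) + 1).natAbs = n + 1 := by omega
  have h2 : ((n : ℤ) + 1 - 1).natAbs = n := by omega
  unfold ee G
  rw [h1, h2]
  have := log_ratio_le n ht
  push_cast
  linarith

/-- reindex a finite sum by `j ↦ c - j`. -/
lemma sum_reflect' (f : ℤ → ℝ) (c a b a' b' : ℤ) (ha : a' = c - b) (hb : b' = c - a) :
    ∑ m ∈ Finset.Icc a' b', f m = ∑ j ∈ Finset.Icc a b, f (c - j) := by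
  subst ha hb
  apply Finset.sum_nbij' (i := fun m => c - m) (j := fun j => c - j)
  · intro m hm; simp only [Finset.mem_Icc] at *; omega
  · intro j hj; simp only [Finset.mem_Icc] at *; omega
  · intro m _; omega
  · intro j _; omega
  · intro m _; congr 1; omega

/-- reindex a finite sum by `j ↦ j + c`. -/
lemma sum_shift' (f : ℤ → ℝ) (c a b a' b' : ℤ) (ha : a' = a + c) (hb : b' = b + c) :
    ∑ m ∈ Finset.Icc a' b', f m = ∑ j ∈ Finset.Icc a b, f (j + c) := by
  subst ha hb
  apply Finset.sum_nbij' (i := fun m => m - c) (j := fun j => j + c)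
  · intro m hm; simp only [Finset.mem_Icc] at *; omega
  · intro j hj; simp only [Finset.mem_Icc] at *; omega
  · intro m _; omega
  · intro j _; omega
  · intro m _; congr 1; omega

end BesselMain

namespace BesselMain

lemma comb (p : ℤ → ℝ) (hp0 : ∀ m, 0 ≤ p m) (hfin : ∀ s : Finset ℤ, ∑ m ∈ s, p m ≤ 1)
    (hsymm : ∀ m, p (-m) = p m) (k N : ℕ) (hN : 2 * k + 2 ≤ N) :
    ∑ j ∈ Finset.Icc (1 : ℤ) (N : ℤ), (j : ℝ) * (p (1 + k - j) - p (j + k)) ≤ (k : ℝ) + 1 := by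
  set M : ℤ := (N : ℤ) - 1 - k with hM
  have hMk : (k : ℤ) + 1 ≤ M := by omega
  set g : ℤ → ℝ := fun m => ((1 + k - m : ℤ) : ℝ) * p m with hg
  -- A = sum over j of j * p (1+k-j)
  have hA : ∑ j ∈ Finset.Icc (1 : ℤ) (N : ℤ), (j : ℝ) * p (1 + k - j)
      = ∑ m ∈ Finset.Icc ((1 : ℤ) + k - N) (k : ℤ), g m := by
    rw [sum_reflect' g (1 + k) 1 N (1 + k - N) (k : ℤ) (by ring) (by ring)]
    apply Finset.sum_congr rfl
    intro j _
    simp only [hg]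
    rw [show ((1 : ℤ) + k - (1 + k - j)) = j by ring]
  -- split A
  have hsplit : Finset.Icc ((1 : ℤ) + k - N) (k : ℤ)
      = Finset.Icc ((1 : ℤ) + k - N) (-(k : ℤ) - 1) ∪ Finset.Icc (-(k : ℤ)) (k : ℤ) := by
    ext x; simp only [Finset.mem_Icc, Finset.mem_union]; omega
  have hdisj : Disjoint (Finset.Icc ((1 : ℤ) + k - N) (-(k : ℤ) - 1)) (Finset.Icc (-(k : ℤ)) (k : ℤ)) := by
    rw [Finset.disjoint_left]
    intro a ha hb
    simp only [Finset.mem_Icc] at ha hb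
    omega
  -- part 1 : reflect onto positive side
  have hpart1 : ∑ m ∈ Finset.Icc ((1 : ℤ) + k - N) (-(k : ℤ) - 1), g m
      = ∑ n ∈ Finset.Icc ((k : ℤ) + 1) M, ((1 + k + n : ℤ) : ℝ) * p n := by
    rw [sum_reflect' g 0 ((k : ℤ) + 1) M ((1 : ℤ) + k - N) (-(k : ℤ) - 1) (by omega) (by omega)]
    apply Finset.sum_congr rfl
    intro n _
    simp only [hg]
    rw [show ((1 : ℤ) + k - (0 - n)) = 1 + k + n by ring, show ((0 : ℤ) - n) = -n by ring, hsymm]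
  -- part 2 : the symmetric middle
  have hZ : ∑ m ∈ Finset.Icc (-(k : ℤ)) (k : ℤ), (m : ℝ) * p m = 0 := by
    have h1 : ∑ m ∈ Finset.Icc (-(k : ℤ)) (k : ℤ), (m : ℝ) * p m
        = ∑ m ∈ Finset.Icc (-(k : ℤ)) (k : ℤ), ((0 - m : ℤ) : ℝ) * p (0 - m) := by
      rw [← sum_reflect' (fun m => (m : ℝ) * p m) 0 (-(k : ℤ)) (k : ℤ) (-(k : ℤ)) (k : ℤ) (by omega) (by omega)]
    have h2 : ∀ m : ℤ, ((0 - m : ℤ) : ℝ) * p (0 - m) = -((m : ℝ) * p m) := by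
      intro m
      rw [show ((0 : ℤ) - m) = -m by ring, hsymm]
      push_cast
      ring
    rw [Finset.sum_congr rfl (fun m _ => h2 m), Finset.sum_neg_distrib] at h1
    linarith
  have hpart2 : ∑ m ∈ Finset.Icc (-(k : ℤ)) (k : ℤ), g m
      = ((k : ℝ) + 1) * ∑ m ∈ Finset.Icc (-(k : ℤ)) (k : ℤ), p m := by
    have : ∀ m : ℤ, g m = ((k : ℝ) + 1) * p m - (m : ℝ) * p m := by
      intro m; simp only [hg]; push_cast; ring
    rw [Finset.sum_congr rfl (fun m _ => this m), Finset.sum_sub_distrib, hZ, ← Finset.mul_sum]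
    ring
  -- B
  have hB : ∑ j ∈ Finset.Icc (1 : ℤ) (N : ℤ), (j : ℝ) * p (j + k)
      = ∑ n ∈ Finset.Icc ((k : ℤ) + 1) ((N : ℤ) + k), ((n - k : ℤ) : ℝ) * p n := by
    rw [sum_shift' (fun n => ((n - k : ℤ) : ℝ) * p n) (k : ℤ) 1 (N : ℤ) ((k : ℤ) + 1) ((N : ℤ) + k) (by ring) (by ring)]
    apply Finset.sum_congr rfl
    intro j _
    rw [show (j + (k : ℤ) - k) = j by ring]
  have hB' : ∑ n ∈ Finset.Icc ((k : ℤ) + 1) M, ((n - k : ℤ) : ℝ) * p n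
      ≤ ∑ n ∈ Finset.Icc ((k : ℤ) + 1) ((N : ℤ) + k), ((n - k : ℤ) : ℝ) * p n := by
    apply Finset.sum_le_sum_of_subset_of_nonneg
    · apply Finset.Icc_subset_Icc_right; omega
    · intro n hn _
      simp only [Finset.mem_Icc] at hn
      have h9 : (0 : ℤ) ≤ n - k := by omega
      have : (0 : ℝ) ≤ ((n - k : ℤ) : ℝ) := by exact_mod_cast h9
      exact mul_nonneg this (hp0 n)
  -- reflected tail
  have htail : ∑ n ∈ Finset.Icc ((k : ℤ) + 1) M, p n = ∑ n ∈ Finset.Icc (-M) (-(k : ℤ) - 1), p n := by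
    rw [sum_reflect' p 0 ((k : ℤ) + 1) M (-M) (-(k : ℤ) - 1) (by omega) (by omega)]
    apply Finset.sum_congr rfl
    intro n _
    rw [show ((0 : ℤ) - n) = -n by ring, hsymm]
  have htail_nonneg : 0 ≤ ∑ n ∈ Finset.Icc ((k : ℤ) + 1) M, p n :=
    Finset.sum_nonneg fun n _ => hp0 n
  have hmid_nonneg : 0 ≤ ∑ m ∈ Finset.Icc (-(k : ℤ)) (k : ℤ), p m :=
    Finset.sum_nonneg fun n _ => hp0 n
  -- the big union
  have hunion : ∑ n ∈ Finset.Icc (-M) (-(k : ℤ) - 1), p n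
      + ∑ m ∈ Finset.Icc (-(k : ℤ)) (k : ℤ), p m
      + ∑ n ∈ Finset.Icc ((k : ℤ) + 1) M, p n = ∑ n ∈ Finset.Icc (-M) M, p n := by
    have h1 : Finset.Icc (-M) M = Finset.Icc (-M) (-(k : ℤ) - 1) ∪ (Finset.Icc (-(k : ℤ)) (k : ℤ) ∪ Finset.Icc ((k : ℤ) + 1) M) := by
      ext x; simp only [Finset.mem_Icc, Finset.mem_union]; omega
    have hd1 : Disjoint (Finset.Icc (-(k : ℤ)) (k : ℤ)) (Finset.Icc ((k : ℤ) + 1) M) := by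
      rw [Finset.disjoint_left]; intro a ha hb; simp only [Finset.mem_Icc] at ha hb; omega
    have hd2 : Disjoint (Finset.Icc (-M) (-(k : ℤ) - 1)) (Finset.Icc (-(k : ℤ)) (k : ℤ) ∪ Finset.Icc ((k : ℤ) + 1) M) := by
      rw [Finset.disjoint_left]; intro a ha hb
      simp only [Finset.mem_Icc, Finset.mem_union] at ha hb; omega
    rw [h1, Finset.sum_union hd2, Finset.sum_union hd1]
    ring
  have hone : ∑ n ∈ Finset.Icc (-M) M, p n ≤ 1 := hfin _
  -- put it together
  have expand : ∑ j ∈ Finset.Icc (1 : ℤ) (N : ℤ), (j : ℝ) * (p (1 + k - j) - p (j + k))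
      = (∑ j ∈ Finset.Icc (1 : ℤ) (N : ℤ), (j : ℝ) * p (1 + k - j))
        - ∑ j ∈ Finset.Icc (1 : ℤ) (N : ℤ), (j : ℝ) * p (j + k) := by
    rw [← Finset.sum_sub_distrib]
    apply Finset.sum_congr rfl
    intro j _; ring
  have hdiff : ∑ n ∈ Finset.Icc ((k : ℤ) + 1) M, ((1 + k + n : ℤ) : ℝ) * p n
      - ∑ n ∈ Finset.Icc ((k : ℤ) + 1) M, ((n - k : ℤ) : ℝ) * p n
      = (2 * (k : ℝ) + 1) * ∑ n ∈ Finset.Icc ((k : ℤ) + 1) M, p n := by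
    rw [← Finset.sum_sub_distrib, Finset.mul_sum]
    apply Finset.sum_congr rfl
    intro n _
    push_cast
    ring
  rw [expand, hA, hsplit, Finset.sum_union hdisj, hpart1, hpart2, hB]
  have step1 : ∑ n ∈ Finset.Icc ((k : ℤ) + 1) M, ((1 + k + n : ℤ) : ℝ) * p n
      + ((k : ℝ) + 1) * ∑ m ∈ Finset.Icc (-(k : ℤ)) (k : ℤ), p m
      - ∑ n ∈ Finset.Icc ((k : ℤ) + 1) ((N : ℤ) + k), ((n - k : ℤ) : ℝ) * p n
      ≤ (2 * (k : ℝ) + 1) * (∑ n ∈ Finset.Icc ((k : ℤ) + 1) M, p n)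
        + ((k : ℝ) + 1) * ∑ m ∈ Finset.Icc (-(k : ℤ)) (k : ℤ), p m := by
    have := hB'
    linarith [hdiff]
  refine step1.trans ?_
  have step2 : (2 * (k : ℝ) + 1) * (∑ n ∈ Finset.Icc ((k : ℤ) + 1) M, p n)
      ≤ ((k : ℝ) + 1) * (∑ n ∈ Finset.Icc (-M) (-(k : ℤ) - 1), p n
          + ∑ n ∈ Finset.Icc ((k : ℤ) + 1) M, p n) := by
    rw [← htail]
    nlinarith [htail_nonneg]
  calc (2 * (k : ℝ) + 1) * (∑ n ∈ Finset.Icc ((k : ℤ) + 1) M, p n)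
        + ((k : ℝ) + 1) * ∑ m ∈ Finset.Icc (-(k : ℤ)) (k : ℤ), p m
      ≤ ((k : ℝ) + 1) * (∑ n ∈ Finset.Icc (-M) (-(k : ℤ) - 1), p n
          + ∑ m ∈ Finset.Icc (-(k : ℤ)) (k : ℤ), p m
          + ∑ n ∈ Finset.Icc ((k : ℤ) + 1) M, p n) := by
        nlinarith [step2, hmid_nonneg]
    _ = ((k : ℝ) + 1) * ∑ n ∈ Finset.Icc (-M) M, p n := by rw [hunion]
    _ ≤ ((k : ℝ) + 1) * 1 := by
        apply mul_le_mul_of_nonneg_left hone (by positivity)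
    _ = (k : ℝ) + 1 := by ring

end BesselMain

namespace BesselMain
open BesselAux BesselAux2

lemma Tk (p : ℤ → ℝ) (hp0 : ∀ m, 0 ≤ p m) (hfin : ∀ s : Finset ℤ, ∑ m ∈ s, p m ≤ 1)
    (hsymm : ∀ m, p (-m) = p m)
    (hunimodal : ∀ m m' : ℤ, m.natAbs ≤ m'.natAbs → p m' ≤ p m)
    {t : ℝ} (ht : 0 < t) (k : ℕ)
    (hsume : Summable (fun j : ℤ => p (j + (k : ℤ)) * ee t j)) :
    ∑' j : ℤ, p (j + (k : ℤ)) * ee t j ≤ ((k : ℝ) + 1) / t := by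
  set f : ℤ → ℝ := fun j => p (j + (k : ℤ)) * ee t j with hf
  have hf2 : Summable (fun j : ℤ => f (1 - j)) := by
    have := (Equiv.subLeft (1 : ℤ)).summable_iff (f := f) |>.2 hsume
    exact this.congr fun j => rfl
  have hrefl_tsum : ∑' j : ℤ, f (1 - j) = ∑' j : ℤ, f j := by
    have := (Equiv.subLeft (1 : ℤ)).tsum_eq f
    exact this
  set F : ℤ → ℝ := fun j => f j + f (1 - j) with hFdef
  have hFsum : Summable F := hsume.add hf2
  have h2T : ∑' j : ℤ, F j = 2 * ∑' j : ℤ, f j := by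
    rw [hFdef]
    rw [Summable.tsum_add hsume hf2, hrefl_tsum]
    ring
  have hFeq : ∀ j : ℤ, F j = (p (j + (k : ℤ)) - p (1 + k - j)) * ee t j := by
    intro j
    simp only [hFdef, hf]
    rw [ee_reflect, show ((1 : ℤ) - j + k) = 1 + k - j by ring]
    ring
  have hF0 : ∀ j : ℤ, 0 ≤ F j := by
    intro j
    rw [hFeq]
    rcases le_or_gt j 0 with hj | hj
    · have h1 : p (1 + k - j) ≤ p (j + k) := hunimodal _ _ (by omega)
      exact mul_nonneg (by linarith) (ee_nonneg ht hj)
    · have h1 : p (j + k) ≤ p (1 + k - j) := hunimodal _ _ (by omega)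
      have h2 := ee_nonpos ht hj
      nlinarith [mul_nonneg (by linarith : (0:ℝ) ≤ p (1 + k - j) - p (j + k))
        (by linarith : (0:ℝ) ≤ -(ee t j))]
  have hFrefl : ∀ j : ℤ, F (1 - j) = F j := by
    intro j
    simp only [hFdef]
    rw [show ((1 : ℤ) - (1 - j)) = j by ring]
    ring
  have hFle : ∑' j : ℤ, F j ≤ 2 * (((k : ℝ) + 1) / t) := by
    apply Summable.tsum_le_of_sum_le hFsum
    intro s
    set N : ℕ := 2 * k + 2 + s.sup (fun j => j.natAbs) with hNdef
    have hN : 2 * k + 2 ≤ N := by omega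
    have hsub : s ⊆ Finset.Icc (1 - (N : ℤ)) (N : ℤ) := by
      intro j hj
      have hle : j.natAbs ≤ s.sup (fun j : ℤ => j.natAbs) := Finset.le_sup hj
      simp only [Finset.mem_Icc]
      omega
    have h1 : ∑ j ∈ s, F j ≤ ∑ j ∈ Finset.Icc (1 - (N : ℤ)) (N : ℤ), F j :=
      Finset.sum_le_sum_of_subset_of_nonneg hsub (fun j _ _ => hF0 j)
    have hsplit : Finset.Icc (1 - (N : ℤ)) (N : ℤ)
        = Finset.Icc (1 - (N : ℤ)) 0 ∪ Finset.Icc 1 (N : ℤ) := by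
      ext x; simp only [Finset.mem_Icc, Finset.mem_union]; omega
    have hdisj : Disjoint (Finset.Icc (1 - (N : ℤ)) 0) (Finset.Icc 1 (N : ℤ)) := by
      rw [Finset.disjoint_left]; intro a ha hb
      simp only [Finset.mem_Icc] at ha hb; omega
    have hpair : ∑ j ∈ Finset.Icc (1 - (N : ℤ)) 0, F j = ∑ j ∈ Finset.Icc 1 (N : ℤ), F j := by
      rw [sum_reflect' F 1 1 (N : ℤ) (1 - (N : ℤ)) 0 (by omega) (by omega)]
      exact Finset.sum_congr rfl fun j _ => hFrefl j
    have hhalf : ∑ j ∈ Finset.Icc 1 (N : ℤ), F j ≤ ((k : ℝ) + 1) / t := by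
      have hterm : ∀ j ∈ Finset.Icc (1 : ℤ) (N : ℤ),
          F j ≤ (1 / t) * ((j : ℝ) * (p (1 + k - j) - p (j + k))) := by
        intro j hj
        simp only [Finset.mem_Icc] at hj
        rw [hFeq]
        have hcoef : 0 ≤ p (1 + k - j) - p (j + k) := by
          have := hunimodal (1 + k - j) (j + k) (by omega)
          linarith
        have hee := neg_ee_le ht hj.1
        have h2 : (p (j + k) - p (1 + k - j)) * ee t j
            = (p (1 + k - j) - p (j + k)) * (-(ee t j)) := by ring
        rw [h2]
        calc (p (1 + k - j) - p (j + k)) * (-(ee t j))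
            ≤ (p (1 + k - j) - p (j + k)) * ((j : ℝ) / t) :=
              mul_le_mul_of_nonneg_left hee hcoef
          _ = (1 / t) * ((j : ℝ) * (p (1 + k - j) - p (j + k))) := by ring
      calc ∑ j ∈ Finset.Icc 1 (N : ℤ), F j
          ≤ ∑ j ∈ Finset.Icc (1 : ℤ) (N : ℤ), (1 / t) * ((j : ℝ) * (p (1 + k - j) - p (j + k))) :=
            Finset.sum_le_sum hterm
        _ = (1 / t) * ∑ j ∈ Finset.Icc (1 : ℤ) (N : ℤ), (j : ℝ) * (p (1 + k - j) - p (j + k)) := by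
            rw [Finset.mul_sum]
        _ ≤ (1 / t) * ((k : ℝ) + 1) := by
            apply mul_le_mul_of_nonneg_left (comb p hp0 hfin hsymm k N hN) (by positivity)
        _ = ((k : ℝ) + 1) / t := by ring
    calc ∑ j ∈ s, F j ≤ ∑ j ∈ Finset.Icc (1 - (N : ℤ)) (N : ℤ), F j := h1
      _ = ∑ j ∈ Finset.Icc (1 - (N : ℤ)) 0, F j + ∑ j ∈ Finset.Icc 1 (N : ℤ), F j := by
          rw [hsplit, Finset.sum_union hdisj]
      _ = 2 * ∑ j ∈ Finset.Icc 1 (N : ℤ), F j := by rw [hpair]; ring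
      _ ≤ 2 * (((k : ℝ) + 1) / t) := by linarith [hhalf]
  rw [h2T] at hFle
  linarith

end BesselMain

namespace BesselMain
open BesselAux BesselAux2

lemma gauss (d : ℕ) : ∑ k ∈ Finset.range d, ((k : ℝ) + 1) = ((d : ℝ) + (d : ℝ) ^ 2) / 2 := by
  induction d with
  | zero => simp
  | succ n ih => rw [Finset.sum_range_succ, ih]; push_cast; ring

lemma htel (t : ℝ) : ∀ (dd : ℕ) (m : ℤ), G t m - G t (m - dd) = ∑ k ∈ Finset.range dd, ee t (m - k) := by
  intro dd
  induction dd with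
  | zero => intro m; simp
  | succ n ih =>
    intro m
    rw [Finset.sum_range_succ, ← ih m]
    unfold ee
    have h1 : (m - ((n + 1 : ℕ) : ℤ)) = m - n - 1 := by push_cast; ring
    rw [h1]
    ring

end BesselMain

open BesselAux BesselAux2 BesselMain

/-- Expectation bound for ratios of modified Bessel functions under a symmetric
unimodal integer-valued random variable with probability mass function `p`. -/
theorem expectation_log_besselI_ratio_le
    (p : ℤ → ℝ) (hp0 : ∀ m, 0 ≤ p m) (hp1 : ∑' m : ℤ, p m = 1)
    (hsymm : ∀ m, p (-m) = p m)
    (hunimodal : ∀ m m' : ℤ, m.natAbs ≤ m'.natAbs → p m' ≤ p m)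
    (d : ℕ) (t : ℝ) (ht : 0 < t)
    (hsum : Summable fun m : ℤ => p m * Real.log (besselI m t / besselI (m - d) t)) :
    ∑' m : ℤ, p m * Real.log (besselI m t / besselI (m - d) t)
      ≤ ((d : ℝ) + (d : ℝ) ^ 2) / (2 * t) := by
  classical
  have hPsum : Summable p := by
    by_contra h
    rw [tsum_eq_zero_of_not_summable h] at hp1
    norm_num at hp1
  have hfin : ∀ s : Finset ℤ, ∑ m ∈ s, p m ≤ 1 :=
    fun s => hp1 ▸ Summable.sum_le_tsum s (fun m _ => hp0 m) hPsum
  have hlog : ∀ m : ℤ, Real.log (besselI m t / besselI (m - d) t) = G t m - G t (m - d) := by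
    intro m
    rw [besselI_eq_Jn, besselI_eq_Jn,
      Real.log_div (ne_of_gt (Jn_pos _ ht)) (ne_of_gt (Jn_pos _ ht))]
    rfl
  have hsum' : Summable (fun m : ℤ => p m * (G t m - G t (m - d))) :=
    hsum.congr (fun m => by rw [hlog m])
  have hsumk : ∀ k ∈ Finset.range d, Summable (fun m : ℤ => p m * ee t (m - k)) := by
    intro k hk
    simp only [Finset.mem_range] at hk
    have hbound : ∀ m : ℤ, (m < 0 ∨ (d : ℤ) < m) →
        ‖p m * ee t (m - k)‖ ≤ |p m * (G t m - G t (m - d))| := by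
      intro m hcase
      rw [Real.norm_eq_abs]
      rcases hcase with hneg | hpos
      · have hterm : ∀ k' ∈ Finset.range d, 0 ≤ ee t (m - k') :=
          fun k' _ => ee_nonneg ht (by omega)
        have h1 : ee t (m - k) ≤ ∑ k' ∈ Finset.range d, ee t (m - k') :=
          Finset.single_le_sum hterm (Finset.mem_range.2 hk)
        have h2 : 0 ≤ ee t (m - k) := ee_nonneg ht (by omega)
        have h3 : 0 ≤ G t m - G t (m - d) := by
          rw [htel t d m]; exact Finset.sum_nonneg hterm
        rw [abs_of_nonneg (mul_nonneg (hp0 m) h2), abs_of_nonneg (mul_nonneg (hp0 m) h3)]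
        apply mul_le_mul_of_nonneg_left _ (hp0 m)
        rw [htel t d m]
        exact h1
      · have hterm : ∀ k' ∈ Finset.range d, ee t (m - k') ≤ 0 := by
          intro k' hk'
          simp only [Finset.mem_range] at hk'
          exact ee_nonpos ht (by omega)
        have h1 : -(ee t (m - k)) ≤ ∑ k' ∈ Finset.range d, -(ee t (m - k')) :=
          Finset.single_le_sum (f := fun k' : ℕ => -(ee t (m - (k' : ℤ))))
            (fun k' hk' => neg_nonneg.2 (hterm k' hk')) (Finset.mem_range.2 hk)
        have h2 : ee t (m - k) ≤ 0 := ee_nonpos ht (by omega)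
        have h3 : G t m - G t (m - d) ≤ 0 := by
          rw [htel t d m]; exact Finset.sum_nonpos hterm
        have h4 : p m * ee t (m - k) ≤ 0 := by
          nlinarith [mul_nonneg (hp0 m) (neg_nonneg.2 h2)]
        have h5 : p m * (G t m - G t (m - d)) ≤ 0 := by
          nlinarith [mul_nonneg (hp0 m) (neg_nonneg.2 h3)]
        rw [abs_of_nonpos h4, abs_of_nonpos h5]
        have h6 : -(G t m - G t (m - d)) = ∑ k' ∈ Finset.range d, -(ee t (m - k')) := by
          rw [htel t d m, ← Finset.sum_neg_distrib]
        have h7 : -(ee t (m - k)) ≤ -(G t m - G t (m - d)) := by rw [h6]; exact h1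
        nlinarith [mul_le_mul_of_nonneg_left h7 (hp0 m)]
    apply Summable.of_norm_bounded_eventually (g := fun m => |p m * (G t m - G t (m - d))|) hsum'.abs
    rw [Filter.eventually_cofinite]
    apply Set.Finite.subset (Set.finite_Icc (0 : ℤ) (d : ℤ))
    intro m hm
    simp only [Set.mem_setOf_eq] at hm
    rw [Set.mem_Icc]
    by_contra hmm
    push_neg at hmm
    exact hm (hbound m (by omega))
  calc ∑' m : ℤ, p m * Real.log (besselI m t / besselI (m - d) t)
      = ∑' m : ℤ, ∑ k ∈ Finset.range d, p m * ee t (m - k) := by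
        apply tsum_congr
        intro m
        rw [hlog m, htel t d m, Finset.mul_sum]
    _ = ∑ k ∈ Finset.range d, ∑' m : ℤ, p m * ee t (m - k) := Summable.tsum_finsetSum hsumk
    _ ≤ ∑ k ∈ Finset.range d, ((k : ℝ) + 1) / t := by
        apply Finset.sum_le_sum
        intro k hk
        have hshift : ∑' m : ℤ, p m * ee t (m - k) = ∑' j : ℤ, p (j + (k : ℤ)) * ee t j := by
          rw [← (Equiv.addRight (k : ℤ)).tsum_eq (fun m => p m * ee t (m - k))]
          apply tsum_congr
          intro j
          simp only [Equiv.coe_addRight]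
          rw [show (j + (k : ℤ) - k) = j by ring]
        have hsume : Summable (fun j : ℤ => p (j + (k : ℤ)) * ee t j) := by
          have h0 := ((Equiv.addRight (k : ℤ)).summable_iff
            (f := fun m => p m * ee t (m - k))).2 (hsumk k hk)
          apply h0.congr
          intro j
          simp only [Function.comp, Equiv.coe_addRight]
          rw [show (j + (k : ℤ) - k) = j by ring]
        rw [hshift]
        exact Tk p hp0 hfin hsymm hunimodal ht k hsume
    _ = ((d : ℝ) + (d : ℝ) ^ 2) / (2 * t) := by
        rw [← Finset.sum_div, gauss]
        ring
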